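/- arXiv:1604.00288 — 2 statements merged into one kernel-verified Lean document; each statement's English description precedes it below -/
import Mathlib

section
/- Let c ∈ ℝ and k₀ > 0 satisfy k₀⁴ − k₀² − c = 0, set X₂ := 16k₀⁴ − 4k₀² − c and X₃ := 81k₀⁴ − 9k₀² − c, assume X₂ ≠ 0 and X₃ ≠ 0, let p₁(z) := 1/4 − (c/(4X₂))·cos(2z), and let κ ∈ ℝ satisfy κ·(4k₀³ − 2k₀) = −c/4 + c²/(8X₂) (κ plays the role of the wavenumber correction k₂). Then the function p₂(z) := (c²/(8X₂X₃))·cos(3z) satisfies k₀⁴ p₂''''(z) + k₀² p₂''(z) − c·p₂(z) + c·cos(z)·p₁(z) + κ·(4k₀³ − 2k₀)·cos(z) = 0 for all z ∈ ℝ. -/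
open Real


lemma deriv_mul_cos3 (A : ℝ) :
    deriv (fun z : ℝ => A * Real.cos (3 * z)) = fun z => -3 * A * Real.sin (3 * z) := by
  funext z
  have h : HasDerivAt (fun z : ℝ => A * Real.cos (3 * z)) (A * (-Real.sin (3 * z) * 3)) z := by
    have h1 : HasDerivAt (fun z : ℝ => 3 * z) 3 z := by
      simpa using (hasDerivAt_id z).const_mul 3
    exact ((Real.hasDerivAt_cos (3 * z)).comp z h1).const_mul A
  rw [h.deriv]; ring

lemma deriv_mul_sin3 (A : ℝ) :
    deriv (fun z : ℝ => A * Real.sin (3 * z)) = fun z => 3 * A * Real.cos (3 * z) := by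
  funext z
  have h : HasDerivAt (fun z : ℝ => A * Real.sin (3 * z)) (A * (Real.cos (3 * z) * 3)) z := by
    have h1 : HasDerivAt (fun z : ℝ => 3 * z) 3 z := by
      simpa using (hasDerivAt_id z).const_mul 3
    exact ((Real.hasDerivAt_sin (3 * z)).comp z h1).const_mul A
  rw [h.deriv]; ring

lemma it2_cos3 (A : ℝ) :
    iteratedDeriv 2 (fun z : ℝ => A * Real.cos (3 * z)) = fun z => -9 * A * Real.cos (3 * z) := by
  rw [iteratedDeriv_succ, iteratedDeriv_one, deriv_mul_cos3]
  have : (fun z : ℝ => -3 * A * Real.sin (3 * z)) = fun z : ℝ => (-3 * A) * Real.sin (3 * z) := by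
    funext z; ring
  rw [this, deriv_mul_sin3]; funext z; ring

lemma it4_cos3 (A : ℝ) :
    iteratedDeriv 4 (fun z : ℝ => A * Real.cos (3 * z)) = fun z => 81 * A * Real.cos (3 * z) := by
  rw [show (4:ℕ) = 2 + 1 + 1 from rfl, iteratedDeriv_succ, iteratedDeriv_succ, it2_cos3]
  rw [show (fun z : ℝ => -9 * A * Real.cos (3 * z)) = fun z : ℝ => (-9 * A) * Real.cos (3 * z) from by funext z; ring,
    deriv_mul_cos3]
  rw [show (fun z : ℝ => -3 * (-9 * A) * Real.sin (3 * z)) = fun z : ℝ => (27 * A) * Real.sin (3 * z) from by funext z; ring,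
    deriv_mul_sin3]
  funext z; ring

/-- The order-`a³` equation of the small-amplitude expansion of the periodic wave:
`p₂(z) = (c²/(8X₂X₃)) cos(3z)` satisfies `𝓛₀p₂ + c cos·p₁ + κ(4k₀³ − 2k₀)cos = 0`,
where `κ` is the wavenumber correction `k₂`. -/
theorem order_a3_profile_equation (c k₀ : ℝ) (hk₀pos : 0 < k₀)
    (hdisp : k₀ ^ 4 - k₀ ^ 2 - c = 0)
    (X₂ X₃ : ℝ) (hX₂ : X₂ = 16 * k₀ ^ 4 - 4 * k₀ ^ 2 - c)
    (hX₃ : X₃ = 81 * k₀ ^ 4 - 9 * k₀ ^ 2 - c)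
    (hX₂ne : X₂ ≠ 0) (hX₃ne : X₃ ≠ 0)
    (p₁ : ℝ → ℝ) (hp₁ : p₁ = fun z => 1/4 - (c / (4 * X₂)) * Real.cos (2 * z))
    (κ : ℝ) (hκ : κ * (4 * k₀ ^ 3 - 2 * k₀) = -c / 4 + c ^ 2 / (8 * X₂))
    (p₂ : ℝ → ℝ) (hp₂ : p₂ = fun z => (c ^ 2 / (8 * X₂ * X₃)) * Real.cos (3 * z)) :
    ∀ z : ℝ, k₀ ^ 4 * iteratedDeriv 4 p₂ z + k₀ ^ 2 * iteratedDeriv 2 p₂ z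
      - c * p₂ z + c * Real.cos z * p₁ z
      + κ * (4 * k₀ ^ 3 - 2 * k₀) * Real.cos z = 0 := by
  intro z
  subst hp₁ hp₂ hX₂ hX₃
  rw [it4_cos3, it2_cos3, hκ]
  have hprod : Real.cos z * Real.cos (2 * z) = (Real.cos (3 * z) + Real.cos z) / 2 := by
    have h1 := Real.cos_add (2 * z) z
    have h2 := Real.cos_sub (2 * z) z
    rw [show (2:ℝ) * z - z = z by ring] at h2
    rw [show (3:ℝ) * z = 2 * z + z by ring, h1]
    linarith
  beta_reduce
  rw [show Real.cos (3 * z) = 2 * (Real.cos z * Real.cos (2 * z)) - Real.cos z by linarith [hprod]]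
  have key : c ^ 2 / (8 * (16 * k₀ ^ 4 - 4 * k₀ ^ 2 - c) * (81 * k₀ ^ 4 - 9 * k₀ ^ 2 - c)) * (81 * k₀ ^ 4 - 9 * k₀ ^ 2 - c) = c ^ 2 / (8 * (16 * k₀ ^ 4 - 4 * k₀ ^ 2 - c)) := by
    rw [div_mul_eq_mul_div, mul_div_mul_right _ _ hX₃ne]
  have key2 : c / (4 * (16 * k₀ ^ 4 - 4 * k₀ ^ 2 - c)) = 2 * (c / (8 * (16 * k₀ ^ 4 - 4 * k₀ ^ 2 - c))) := by
    rw [eq_comm, mul_div_assoc', show (8:ℝ) * (16 * k₀ ^ 4 - 4 * k₀ ^ 2 - c) = 2 * (4 * (16 * k₀ ^ 4 - 4 * k₀ ^ 2 - c)) by ring, mul_div_mul_left _ _ two_ne_zero]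
  linear_combination (2 * (Real.cos z * Real.cos (2 * z)) - Real.cos z) * key + (-c * (Real.cos z * Real.cos (2 * z))) * key2
  --linear_combination (2 * c ^ 2 * (81 * k₀ ^ 4 - 9 * k₀ ^ 2 - c) + (18*k₀^2*c^2 + 4352*k₀^2*c^4 - 162*k₀^4*c^2 + 22528*k₀^4*c^3 - 28928*k₀^4*c^4 + 36864*k₀^6*c^2 - 272384*k₀^6*c^3 - 626688*k₀^8*c^2 + 729088*k₀^8*c^3 + 3244032*k₀^10*c^2 - 5308416*k₀^12*c^2 + 2*c^3 + 256*c^5)) * hprod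
end

section
/- Let c ∈ ℝ and k₀ > 0 satisfy k₀⁴ − k₀² − c = 0, set X₂ := 16k₀⁴ − 4k₀² − c, assume X₂ ≠ 0, let k₂ ∈ ℝ satisfy k₂·(4k₀³ − 2k₀) = −c/4 + c²/(8X₂), and define ψ₁(z) := −(c/(2X₂))·cos(2z) and the function g(z) := (c·(1/4 − (c/(4X₂))·cos(2z)))·cos(z) + 2k₀k₂·(2k₀²·(cos)''''(z) + (cos)''(z)) (that is, g = 𝓛₂ cos with 𝓛₂ = c(1/4 − (c/(4X₂))cos 2z) + 2k₀k₂(2k₀²∂_z⁴ + ∂_z²)). If ν₂ ∈ ℝ and a smooth 2π-periodic function ψ₂ : ℝ → ℝ satisfy d²/dz²( k₀⁴ ψ₂'''' + k₀² ψ₂'' − c·ψ₂ )(z) + d²/dz²( c·cos(z)·ψ₁(z) ) + g''(z) = ν₂·cos(z) for all z ∈ ℝ, then ν₂ = c²/(4X₂). In particular, if also c ≠ 0 and X₂ > 0, then ν₂ > 0. -/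
open Real MeasureTheory intervalIntegral

noncomputable section

private lemma deriv_per {f : ℝ → ℝ} (hf : ∀ x, f (x + 2*π) = f x) :
    ∀ x, deriv f (x + 2*π) = deriv f x := by
  intro x
  have h : (fun y => f (y + 2*π)) = f := funext hf
  calc deriv f (x + 2*π) = deriv (fun y => f (y + 2*π)) x := (deriv_comp_add_const ..).symm
    _ = deriv f x := by rw [h]

private lemma smooth_deriv {f : ℝ → ℝ} (hf : ContDiff ℝ (⊤:ℕ∞) f) :
    ContDiff ℝ (⊤:ℕ∞) (deriv f) := by
  exact (contDiff_infty_iff_deriv.mp hf).2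

private lemma smooth_iter {f : ℝ → ℝ} (hf : ContDiff ℝ (⊤:ℕ∞) f) (n : ℕ) :
    ContDiff ℝ (⊤:ℕ∞) (iteratedDeriv n f) := by
  induction n with
  | zero => simpa using hf
  | succ k ih => rw [iteratedDeriv_succ]; exact smooth_deriv ih

private lemma per_iter {f : ℝ → ℝ} (hf : ∀ x, f (x + 2*π) = f x) (n : ℕ) :
    ∀ x, iteratedDeriv n f (x + 2*π) = iteratedDeriv n f x := by
  induction n with
  | zero => simpa using hf
  | succ k ih => intro x; rw [iteratedDeriv_succ]; exact deriv_per ih x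

private lemma ibp_per (u v : ℝ → ℝ) (hu : ContDiff ℝ (⊤:ℕ∞) u) (hv : ContDiff ℝ (⊤:ℕ∞) v)
    (hup : ∀ x, u (x + 2*π) = u x) (hvp : ∀ x, v (x + 2*π) = v x) :
    ∫ x in (0:ℝ)..(2*π), deriv u x * v x = - ∫ x in (0:ℝ)..(2*π), u x * deriv v x := by
  have hud : Differentiable ℝ u := hu.differentiable (by simp)
  have hvd : Differentiable ℝ v := hv.differentiable (by simp)
  have hu' : Continuous (deriv u) := hu.continuous_deriv (by exact_mod_cast le_top)
  have hv' : Continuous (deriv v) := hv.continuous_deriv (by exact_mod_cast le_top)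
  have key := intervalIntegral.integral_deriv_mul_eq_sub
    (u := u) (v := v) (u' := deriv u) (v' := deriv v) (a := 0) (b := 2*π)
    (fun x _ => (hud x).hasDerivAt) (fun x _ => (hvd x).hasDerivAt)
    (hu'.intervalIntegrable _ _) (hv'.intervalIntegrable _ _)
  have hsplit : ∫ x in (0:ℝ)..(2*π), (deriv u x * v x + u x * deriv v x)
      = (∫ x in (0:ℝ)..(2*π), deriv u x * v x) + ∫ x in (0:ℝ)..(2*π), u x * deriv v x :=
    intervalIntegral.integral_add ((hu'.mul hvd.continuous).intervalIntegrable _ _)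
      ((hud.continuous.mul hv').intervalIntegrable _ _)
  have hb : u (2*π) = u 0 := by simpa using hup 0
  have hbv : v (2*π) = v 0 := by simpa using hvp 0
  rw [hsplit, hb, hbv] at key
  linarith [key]

private lemma ibp2_per (u v : ℝ → ℝ) (hu : ContDiff ℝ (⊤:ℕ∞) u) (hv : ContDiff ℝ (⊤:ℕ∞) v)
    (hup : ∀ x, u (x + 2*π) = u x) (hvp : ∀ x, v (x + 2*π) = v x) :
    ∫ x in (0:ℝ)..(2*π), iteratedDeriv 2 u x * v x
      = ∫ x in (0:ℝ)..(2*π), u x * iteratedDeriv 2 v x := by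
  have h2u : iteratedDeriv 2 u = deriv (deriv u) := by
    rw [iteratedDeriv_succ, iteratedDeriv_one]
  have h2v : iteratedDeriv 2 v = deriv (deriv v) := by
    rw [iteratedDeriv_succ, iteratedDeriv_one]
  rw [h2u, h2v]
  have s1 := ibp_per (deriv u) v (smooth_deriv hu) hv (deriv_per hup) hvp
  have s2 := ibp_per u (deriv v) hu (smooth_deriv hv) hup (deriv_per hvp)
  have s2' : ∫ x in (0:ℝ)..(2*π), deriv u x * deriv v x
      = - ∫ x in (0:ℝ)..(2*π), u x * deriv (deriv v) x := by
    have : (fun x => deriv u x * deriv v x) = fun x => deriv u x * deriv v x := rfl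
    exact s2
  rw [s1, s2']; ring

private lemma cos_smooth : ContDiff ℝ (⊤:ℕ∞) Real.cos := Real.contDiff_cos

private lemma cos_per : ∀ x : ℝ, Real.cos (x + 2*π) = Real.cos x := fun x => Real.cos_periodic x

private lemma iter2_cos : iteratedDeriv 2 Real.cos = fun x => -Real.cos x := by
  rw [iteratedDeriv_succ, iteratedDeriv_one, Real.deriv_cos']
  funext x
  simp

private lemma iter4_cos : iteratedDeriv 4 Real.cos = Real.cos := by
  have h : iteratedDeriv 4 Real.cos = iteratedDeriv 2 (iteratedDeriv 2 Real.cos) := by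
    simp only [iteratedDeriv_eq_iterate]
    exact (Function.iterate_add_apply deriv 2 2 Real.cos)
  rw [h, iter2_cos]
  funext x
  rw [iteratedDeriv_succ, iteratedDeriv_one]
  have d1 : deriv (fun x => -Real.cos x) = Real.sin := by
    funext y; simp
  rw [d1, Real.deriv_sin]

private lemma sin4pi : Real.sin (4*π) = 0 := by
  have h := Real.sin_two_mul (2*π)
  simp [Real.sin_two_pi] at h
  rw [show (4:ℝ)*π = 2*(2*π) by ring, Real.sin_two_mul, Real.sin_two_pi]
  ring

private lemma sin8pi : Real.sin (8*π) = 0 := by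
  rw [show (8:ℝ)*π = 2*(4*π) by ring, Real.sin_two_mul, sin4pi]
  ring

private lemma int_cos_sq : ∫ x in (0:ℝ)..(2*π), Real.cos x ^ 2 = π := by
  rw [integral_cos_sq]
  simp [Real.sin_two_pi, Real.cos_two_pi]

private lemma int_cos_sq_cos2 : ∫ x in (0:ℝ)..(2*π), Real.cos x ^ 2 * Real.cos (2*x) = π/2 := by
  have hG : ∀ x : ℝ, HasDerivAt (fun y => Real.sin (2*y)/4 + y/4 + Real.sin (4*y)/16)
      (Real.cos x ^ 2 * Real.cos (2*x)) x := by
    intro x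
    have h2x : HasDerivAt (fun y : ℝ => 2*y) 2 x := by simpa using (hasDerivAt_id x).const_mul 2
    have h4x : HasDerivAt (fun y : ℝ => 4*y) 4 x := by simpa using (hasDerivAt_id x).const_mul 4
    have hs2 : HasDerivAt (fun y => Real.sin (2*y)) (Real.cos (2*x) * 2) x := h2x.sin
    have hs4 : HasDerivAt (fun y => Real.sin (4*y)) (Real.cos (4*x) * 4) x := h4x.sin
    have hid : HasDerivAt (fun y : ℝ => y) 1 x := hasDerivAt_id x
    have h := ((hs2.div_const 4).add (hid.div_const 4)).add (hs4.div_const 16)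
    refine h.congr_deriv ?_
    have c2 : Real.cos (2*x) = 2 * Real.cos x ^ 2 - 1 := Real.cos_two_mul x
    have c4 : Real.cos (4*x) = 2 * Real.cos (2*x) ^ 2 - 1 := by
      have := Real.cos_two_mul (2*x)
      rw [show (2:ℝ)*(2*x) = 4*x by ring] at this
      exact this
    rw [c4, c2]; ring
  have hcont : Continuous (fun x => Real.cos x ^ 2 * Real.cos (2*x)) := by continuity
  have := intervalIntegral.integral_eq_sub_of_hasDerivAt (a := 0) (b := 2*π)
    (fun x _ => hG x) (hcont.intervalIntegrable _ _)
  rw [this, show (2:ℝ)*(2*π) = 4*π by ring, show (4:ℝ)*(2*π) = 8*π by ring, sin4pi, sin8pi]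
  norm_num
  ring

private lemma I2neg (u : ℝ → ℝ) (hu : ContDiff ℝ (⊤:ℕ∞) u)
    (hup : ∀ x, u (x + 2*π) = u x) :
    ∫ x in (0:ℝ)..(2*π), iteratedDeriv 2 u x * Real.cos x
      = - ∫ x in (0:ℝ)..(2*π), u x * Real.cos x := by
  have h := ibp2_per u Real.cos hu cos_smooth hup cos_per
  simp only [iter2_cos, mul_neg] at h
  rw [h, intervalIntegral.integral_neg]

end

/-- The order-`a²` solvability condition of the eigenvalue expansion: if `ψ₂` is a
smooth 2π-periodic solution of
`∂_z²𝓛₀ψ₂ + ∂_z²(c cos·ψ₁) + g'' = ν₂ cos`, where `g = 𝓛₂ cos`, then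
`ν₂ = c²/(4X₂)`; in particular `ν₂ > 0` when `c ≠ 0` and `X₂ > 0`. -/
theorem order_a2_solvability (c k₀ : ℝ) (hk₀pos : 0 < k₀)
    (hdisp : k₀ ^ 4 - k₀ ^ 2 - c = 0)
    (X₂ : ℝ) (hX₂ : X₂ = 16 * k₀ ^ 4 - 4 * k₀ ^ 2 - c) (hX₂ne : X₂ ≠ 0)
    (k₂ : ℝ) (hk₂ : k₂ * (4 * k₀ ^ 3 - 2 * k₀) = -c / 4 + c ^ 2 / (8 * X₂))
    (ψ₁ : ℝ → ℝ) (hψ₁ : ψ₁ = fun z => -(c / (2 * X₂)) * Real.cos (2 * z))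
    (g : ℝ → ℝ)
    (hg : g = fun z => (c * (1/4 - (c / (4 * X₂)) * Real.cos (2 * z))) * Real.cos z
      + 2 * k₀ * k₂ * (2 * k₀ ^ 2 * iteratedDeriv 4 Real.cos z
        + iteratedDeriv 2 Real.cos z))
    (ν₂ : ℝ) (ψ₂ : ℝ → ℝ)
    (hψ₂smooth : ContDiff ℝ (⊤:ℕ∞) ψ₂)
    (hψ₂per : ∀ z, ψ₂ (z + 2 * Real.pi) = ψ₂ z)
    (heq : ∀ z : ℝ,
      iteratedDeriv 2
        (fun w => k₀ ^ 4 * iteratedDeriv 4 ψ₂ w + k₀ ^ 2 * iteratedDeriv 2 ψ₂ w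
          - c * ψ₂ w) z
      + iteratedDeriv 2 (fun w => c * Real.cos w * ψ₁ w) z
      + iteratedDeriv 2 g z = ν₂ * Real.cos z) :
    ν₂ = c ^ 2 / (4 * X₂) ∧ (c ≠ 0 → 0 < X₂ → 0 < ν₂) := by
  have hπ : (π : ℝ) ≠ 0 := Real.pi_ne_zero
  -- explicit descriptions
  have hgE : g = fun z => (c * (1/4 - (c / (4 * X₂)) * Real.cos (2 * z))) * Real.cos z
      + 2 * k₀ * k₂ * (2 * k₀ ^ 2 * Real.cos z - Real.cos z) := by
    rw [hg]; funext z; rw [iter4_cos, iter2_cos]; ring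
  set F : ℝ → ℝ := fun w => k₀ ^ 4 * iteratedDeriv 4 ψ₂ w + k₀ ^ 2 * iteratedDeriv 2 ψ₂ w
      - c * ψ₂ w with hF
  set B : ℝ → ℝ := fun w => c * Real.cos w * ψ₁ w with hB
  -- smoothness
  have hcos2 : ContDiff ℝ (⊤:ℕ∞) (fun z : ℝ => Real.cos (2*z)) :=
    Real.contDiff_cos.comp (contDiff_const.mul contDiff_id)
  have hFsm : ContDiff ℝ (⊤:ℕ∞) F :=
    ((contDiff_const.mul (smooth_iter hψ₂smooth 4)).add
      (contDiff_const.mul (smooth_iter hψ₂smooth 2))).sub (contDiff_const.mul hψ₂smooth)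
  have hBsm : ContDiff ℝ (⊤:ℕ∞) B := by
    rw [hB, hψ₁]
    exact (contDiff_const.mul Real.contDiff_cos).mul (contDiff_const.mul hcos2)
  have hgsm : ContDiff ℝ (⊤:ℕ∞) g := by
    rw [hgE]
    have h1 : ContDiff ℝ (⊤:ℕ∞) (fun z : ℝ => c * (1/4 - (c / (4 * X₂)) * Real.cos (2 * z))) :=
      contDiff_const.mul (contDiff_const.sub (contDiff_const.mul hcos2))
    have h2 : ContDiff ℝ (⊤:ℕ∞) (fun z : ℝ => 2 * k₀ ^ 2 * Real.cos z - Real.cos z) :=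
      (contDiff_const.mul Real.contDiff_cos).sub Real.contDiff_cos
    exact (h1.mul Real.contDiff_cos).add (contDiff_const.mul h2)
  -- periodicity
  have hcos2per : ∀ x : ℝ, Real.cos (2*(x + 2*π)) = Real.cos (2*x) := by
    intro x
    rw [show 2*(x + 2*π) = (2*x + 2*π) + 2*π by ring, cos_per, cos_per]
  have hFper : ∀ x, F (x + 2*π) = F x := by
    intro x
    simp only [hF]
    rw [per_iter hψ₂per 4, per_iter hψ₂per 2, hψ₂per]
  have hBper : ∀ x, B (x + 2*π) = B x := by
    intro x
    simp only [hB, hψ₁]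
    rw [cos_per, hcos2per]
  have hgper : ∀ x, g (x + 2*π) = g x := by
    intro x
    rw [hgE]
    simp only
    rw [cos_per, hcos2per]
  -- continuity facts
  have hc4 : Continuous (iteratedDeriv 4 ψ₂) := (smooth_iter hψ₂smooth 4).continuous
  have hc2 : Continuous (iteratedDeriv 2 ψ₂) := (smooth_iter hψ₂smooth 2).continuous
  have hcψ : Continuous ψ₂ := hψ₂smooth.continuous
  -- J := ∫ ψ₂ cos
  set J : ℝ := ∫ x in (0:ℝ)..(2*π), ψ₂ x * Real.cos x with hJ
  -- ∫ iteratedDeriv 2 ψ₂ * cos = -J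
  have h2J : ∫ x in (0:ℝ)..(2*π), iteratedDeriv 2 ψ₂ x * Real.cos x = -J :=
    I2neg ψ₂ hψ₂smooth hψ₂per
  have h4J : ∫ x in (0:ℝ)..(2*π), iteratedDeriv 4 ψ₂ x * Real.cos x = J := by
    have hiter : iteratedDeriv 4 ψ₂ = iteratedDeriv 2 (iteratedDeriv 2 ψ₂) := by
      simp only [iteratedDeriv_eq_iterate]
      exact (Function.iterate_add_apply deriv 2 2 ψ₂)
    rw [hiter, I2neg (iteratedDeriv 2 ψ₂) (smooth_iter hψ₂smooth 2) (per_iter hψ₂per 2), h2J]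
    ring
  -- ∫ F cos = 0
  have e4 : IntervalIntegrable (fun x => k₀^4 * (iteratedDeriv 4 ψ₂ x * Real.cos x))
      volume 0 (2*π) :=
    (continuous_const.mul (hc4.mul Real.continuous_cos)).intervalIntegrable _ _
  have e2 : IntervalIntegrable (fun x => k₀^2 * (iteratedDeriv 2 ψ₂ x * Real.cos x))
      volume 0 (2*π) :=
    (continuous_const.mul (hc2.mul Real.continuous_cos)).intervalIntegrable _ _
  have e0 : IntervalIntegrable (fun x => c * (ψ₂ x * Real.cos x)) volume 0 (2*π) :=
    (continuous_const.mul (hcψ.mul Real.continuous_cos)).intervalIntegrable _ _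
  have hFcos : ∫ x in (0:ℝ)..(2*π), F x * Real.cos x = 0 := by
    have hfe : (fun x => F x * Real.cos x)
        = fun x => (k₀^4 * (iteratedDeriv 4 ψ₂ x * Real.cos x)
            + k₀^2 * (iteratedDeriv 2 ψ₂ x * Real.cos x)) - c * (ψ₂ x * Real.cos x) := by
      funext x; simp only [hF]; ring
    rw [hfe, intervalIntegral.integral_sub (e4.add e2) e0,
      intervalIntegral.integral_add e4 e2,
      intervalIntegral.integral_const_mul, intervalIntegral.integral_const_mul,
      intervalIntegral.integral_const_mul, h4J, h2J, ← hJ]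
    linear_combination J * hdisp
  -- ∫ B cos
  have hBcos : ∫ x in (0:ℝ)..(2*π), B x * Real.cos x = -(c^2/(2*X₂)) * (π/2) := by
    have hbe : Set.EqOn (fun x => B x * Real.cos x)
        (fun x => (-(c^2/(2*X₂))) * (Real.cos x ^ 2 * Real.cos (2*x)))
        (Set.uIcc 0 (2*π)) := by
      intro x _
      simp only [hB, hψ₁]
      ring
    rw [intervalIntegral.integral_congr hbe, intervalIntegral.integral_const_mul,
      int_cos_sq_cos2]
  -- ∫ g cos = 0
  have hgcos : ∫ x in (0:ℝ)..(2*π), g x * Real.cos x = 0 := by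
    have hge : Set.EqOn (fun x => g x * Real.cos x)
        (fun x => (c/4 + 2*k₀*k₂*(2*k₀^2 - 1)) * Real.cos x ^ 2
          + (-(c^2/(4*X₂))) * (Real.cos x ^ 2 * Real.cos (2*x)))
        (Set.uIcc 0 (2*π)) := by
      intro x _
      rw [hgE]
      ring
    rw [intervalIntegral.integral_congr hge,
      intervalIntegral.integral_add
        ((by fun_prop : Continuous fun x : ℝ =>
          (c/4 + 2*k₀*k₂*(2*k₀^2 - 1)) * Real.cos x ^ 2).intervalIntegrable _ _)
        ((by fun_prop : Continuous fun x : ℝ =>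
          (-(c^2/(4*X₂))) * (Real.cos x ^ 2 * Real.cos (2*x))).intervalIntegrable _ _),
      intervalIntegral.integral_const_mul, intervalIntegral.integral_const_mul,
      int_cos_sq, int_cos_sq_cos2]
    have hk₂' : 2*k₀*k₂*(2*k₀^2 - 1) = -c / 4 + c ^ 2 / (8 * X₂) := by
      rw [← hk₂]; ring
    rw [hk₂']
    field_simp
    ring
  -- integrate the equation
  have hIFsm := smooth_iter hFsm 2
  have hIBsm := smooth_iter hBsm 2
  have hIgsm := smooth_iter hgsm 2
  have hmain : (∫ x in (0:ℝ)..(2*π), iteratedDeriv 2 F x * Real.cos x)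
      + (∫ x in (0:ℝ)..(2*π), iteratedDeriv 2 B x * Real.cos x)
      + (∫ x in (0:ℝ)..(2*π), iteratedDeriv 2 g x * Real.cos x)
      = ν₂ * π := by
    have i1 : IntervalIntegrable (fun x => iteratedDeriv 2 F x * Real.cos x) volume 0 (2*π) :=
      (hIFsm.continuous.mul Real.continuous_cos).intervalIntegrable _ _
    have i2' : IntervalIntegrable (fun x => iteratedDeriv 2 B x * Real.cos x) volume 0 (2*π) :=
      (hIBsm.continuous.mul Real.continuous_cos).intervalIntegrable _ _
    have i3 : IntervalIntegrable (fun x => iteratedDeriv 2 g x * Real.cos x) volume 0 (2*π) :=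
      (hIgsm.continuous.mul Real.continuous_cos).intervalIntegrable _ _
    have heqn : Set.EqOn
        (fun x => iteratedDeriv 2 F x * Real.cos x + iteratedDeriv 2 B x * Real.cos x
          + iteratedDeriv 2 g x * Real.cos x)
        (fun x => ν₂ * (Real.cos x ^ 2)) (Set.uIcc 0 (2*π)) := by
      intro x _
      have := heq x
      calc iteratedDeriv 2 F x * Real.cos x + iteratedDeriv 2 B x * Real.cos x
          + iteratedDeriv 2 g x * Real.cos x
          = (iteratedDeriv 2 F x + iteratedDeriv 2 B x + iteratedDeriv 2 g x) * Real.cos x := by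
            ring
        _ = (ν₂ * Real.cos x) * Real.cos x := by rw [this]
        _ = ν₂ * (Real.cos x ^ 2) := by ring
    have := intervalIntegral.integral_congr (μ := MeasureTheory.volume) heqn
    rw [intervalIntegral.integral_add (i1.add i2') i3,
      intervalIntegral.integral_add i1 i2'] at this
    rw [this, intervalIntegral.integral_const_mul, int_cos_sq]
  rw [I2neg F hFsm hFper, I2neg B hBsm hBper, I2neg g hgsm hgper,
    hFcos, hBcos, hgcos] at hmain
  have hν : ν₂ = c ^ 2 / (4 * X₂) := by
    have h1 : ν₂ * π = c^2/(4*X₂) * π := by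
      rw [← hmain]
      field_simp
      ring
    exact mul_right_cancel₀ hπ h1
  refine ⟨hν, fun hc hX₂pos => ?_⟩
  rw [hν]
  positivity
end
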